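/- Let m and n be integers with 7 ≤ m ≤ n and n odd. Then there exists a valid black-white coloring (B,W) of the m×n knight chessboard with |B| = |W| = m(n−3)/2 + ⌈m/2⌉. -/
import Mathlib


/-- A square `p = (i,j)` is on the `m × n` board if `1 ≤ i ≤ m` and `1 ≤ j ≤ n`. -/
def OnBoard (m n : ℕ) (p : ℕ × ℕ) : Prop :=
  1 ≤ p.1 ∧ p.1 ≤ m ∧ 1 ≤ p.2 ∧ p.2 ≤ n

/-- Two squares attack each other as knights iff `{|i-i'|,|j-j'|} = {1,2}`. -/
def KnightAttack (p q : ℕ × ℕ) : Prop :=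
  (Nat.dist p.1 q.1 = 1 ∧ Nat.dist p.2 q.2 = 2) ∨
  (Nat.dist p.1 q.1 = 2 ∧ Nat.dist p.2 q.2 = 1)

instance : DecidableRel KnightAttack := fun p q => by
  unfold KnightAttack; infer_instance

/-- A valid black-white coloring of the `m × n` knight chessboard: two disjoint
sets of squares on the board such that no black square attacks a white square. -/
def ValidBW (m n : ℕ) (B W : Finset (ℕ × ℕ)) : Prop :=
  (∀ p ∈ B, OnBoard m n p) ∧ (∀ p ∈ W, OnBoard m n p) ∧
  Disjoint B W ∧ ∀ p ∈ B, ∀ q ∈ W, ¬ KnightAttack p q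

/-- The part of a set of squares lying in column `k`. -/
def col (B : Finset (ℕ × ℕ)) (k : ℕ) : Finset (ℕ × ℕ) :=
  B.filter (fun p => p.2 = k)

/-- Column `k` is full w.r.t. `B`: every square of column `k` lies in `B`. -/
def FullCol (m : ℕ) (B : Finset (ℕ × ℕ)) (k : ℕ) : Prop :=
  ∀ i, 1 ≤ i → i ≤ m → (i, k) ∈ B

/-- Column `k` is almost full w.r.t. `B`: at least `m - 2` of its squares lie in `B`. -/
def AlmostFullCol (m : ℕ) (B : Finset (ℕ × ℕ)) (k : ℕ) : Prop :=
  m - 2 ≤ (col B k).card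

/-- Column `k` is compact w.r.t. `B`: `B ∩ column k = {(1,k),…,(b_k,k)}`. -/
def CompactCol (B : Finset (ℕ × ℕ)) (k : ℕ) : Prop :=
  col B k = (Finset.Icc 1 (col B k).card).image (fun i => (i, k))
theorem stmt2 (m n : ℕ) (hm : 7 ≤ m) (hmn : m ≤ n) (hn : Odd n) :
    ∃ B W : Finset (ℕ × ℕ), ValidBW m n B W ∧
      B.card = m * (n - 3) / 2 + (m + 1) / 2 ∧
      W.card = m * (n - 3) / 2 + (m + 1) / 2 := by
  obtain ⟨t, ht⟩ := hn
  set k : ℕ := (n - 3) / 2 with hkdef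
  have hk : n = 2 * k + 3 := by omega
  set c : ℕ := (m + 1) / 2 with hcdef
  refine ⟨(Finset.Icc 1 m ×ˢ Finset.Icc 1 k) ∪
      (Finset.Icc 1 c).image (fun i => (2 * i - 1, k + 1)),
    (Finset.Icc 1 m ×ˢ Finset.Icc (k + 4) n) ∪
      (Finset.Icc 1 c).image (fun i => (2 * i - 1, k + 3)), ?_, ?_, ?_⟩
  · -- key membership facts
    have hB : ∀ p ∈ (Finset.Icc 1 m ×ˢ Finset.Icc 1 k) ∪
        (Finset.Icc 1 c).image (fun i => (2 * i - 1, k + 1)),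
        1 ≤ p.1 ∧ p.1 ≤ m ∧ 1 ≤ p.2 ∧ p.2 ≤ k + 1 ∧ (p.2 = k + 1 → p.1 % 2 = 1) := by
      intro p hp
      simp only [Finset.mem_union, Finset.mem_product, Finset.mem_Icc,
        Finset.mem_image] at hp
      rcases hp with ⟨⟨h1, h2⟩, h3, h4⟩ | ⟨i, ⟨hi1, hi2⟩, hpe⟩
      · exact ⟨h1, h2, h3, by omega, by omega⟩
      · have e1 : p.1 = 2 * i - 1 := by rw [← hpe]
        have e2 : p.2 = k + 1 := by rw [← hpe]
        refine ⟨by omega, by omega, by omega, by omega, by omega⟩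
    have hW : ∀ p ∈ (Finset.Icc 1 m ×ˢ Finset.Icc (k + 4) n) ∪
        (Finset.Icc 1 c).image (fun i => (2 * i - 1, k + 3)),
        1 ≤ p.1 ∧ p.1 ≤ m ∧ k + 3 ≤ p.2 ∧ p.2 ≤ n ∧ (p.2 = k + 3 → p.1 % 2 = 1) := by
      intro p hp
      simp only [Finset.mem_union, Finset.mem_product, Finset.mem_Icc,
        Finset.mem_image] at hp
      rcases hp with ⟨⟨h1, h2⟩, h3, h4⟩ | ⟨i, ⟨hi1, hi2⟩, hpe⟩
      · exact ⟨h1, h2, by omega, h4, by omega⟩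
      · have e1 : p.1 = 2 * i - 1 := by rw [← hpe]
        have e2 : p.2 = k + 3 := by rw [← hpe]
        refine ⟨by omega, by omega, by omega, by omega, by omega⟩
    refine ⟨?_, ?_, ?_, ?_⟩
    · intro p hp
      obtain ⟨a1, a2, a3, a4, _⟩ := hB p hp
      exact ⟨a1, a2, a3, by omega⟩
    · intro p hp
      obtain ⟨a1, a2, a3, a4, _⟩ := hW p hp
      exact ⟨a1, a2, by omega, a4⟩
    · rw [Finset.disjoint_left]
      intro p hp hp'
      obtain ⟨_, _, _, a4, _⟩ := hB p hp
      obtain ⟨_, _, b3, _, _⟩ := hW p hp'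
      omega
    · intro p hp q hq hatt
      obtain ⟨a1, a2, a3, a4, a5⟩ := hB p hp
      obtain ⟨b1, b2, b3, b4, b5⟩ := hW q hq
      simp only [KnightAttack, Nat.dist] at hatt
      -- column distance is at least 2; equal to 2 only in the odd-row columns
      rcases hatt with ⟨h1, h2⟩ | ⟨h1, h2⟩
      · omega
      · -- col dist 1 impossible
        omega
  · -- card of B
    rw [Finset.card_union_of_disjoint, Finset.card_product,
      Finset.card_image_of_injOn, Nat.card_Icc, Nat.card_Icc, Nat.card_Icc]
    · have h2k : n - 3 = 2 * k := by omega
      have hmk : m * (n - 3) / 2 = m * k := by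
        rw [h2k, show m * (2 * k) = 2 * (m * k) by ring]
        exact Nat.mul_div_cancel_left _ (by norm_num)
      rw [hmk]
      have : (m + 1 - 1) * (k + 1 - 1) = m * k := by
        congr 1 <;> omega
      omega
    · intro a ha b hb hab
      have e1 : 2 * a - 1 = 2 * b - 1 := congrArg Prod.fst hab
      simp only [Finset.coe_Icc, Set.mem_Icc] at ha hb
      omega
    · rw [Finset.disjoint_left]
      intro p hp hp'
      simp only [Finset.mem_product, Finset.mem_Icc] at hp
      simp only [Finset.mem_image, Finset.mem_Icc] at hp'
      obtain ⟨i, _, hpe⟩ := hp'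
      have : p.2 = k + 1 := by rw [← hpe]
      omega
  · -- card of W
    rw [Finset.card_union_of_disjoint, Finset.card_product,
      Finset.card_image_of_injOn, Nat.card_Icc, Nat.card_Icc, Nat.card_Icc]
    · have h2k : n - 3 = 2 * k := by omega
      have hmk : m * (n - 3) / 2 = m * k := by
        rw [h2k, show m * (2 * k) = 2 * (m * k) by ring]
        exact Nat.mul_div_cancel_left _ (by norm_num)
      rw [hmk]
      have : (m + 1 - 1) * (n + 1 - (k + 4)) = m * k := by
        congr 1 <;> omega
      omega
    · intro a ha b hb hab
      have e1 : 2 * a - 1 = 2 * b - 1 := congrArg Prod.fst hab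
      simp only [Finset.coe_Icc, Set.mem_Icc] at ha hb
      omega
    · rw [Finset.disjoint_left]
      intro p hp hp'
      simp only [Finset.mem_product, Finset.mem_Icc] at hp
      simp only [Finset.mem_image, Finset.mem_Icc] at hp'
      obtain ⟨i, _, hpe⟩ := hp'
      have : p.2 = k + 3 := by rw [← hpe]
      omega
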